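/- Let d ≥ 2 and consider the polynomial ring ℂ[u₀, u₁, …, u_d]. Let I be the ideal generated by the quadrics f_{a,b} = u_{a+1}u_{b+1} − u_{a+2}u_b + u_a u_b − u_{a+1}u_{b−1} for all integers 0 ≤ a ≤ d−2 and 1 ≤ b ≤ d−1. Then I is a prime ideal. -/

import Mathlib

open MvPolynomial

namespace Odeco

noncomputable section

variable (d : ℕ)

/-- target ring: variables u = X 0, z = X 1, T = X 2 -/
abbrev T3 := MvPolynomial (Fin 3) ℂ

/-- image of the variable `u_j` -/
def fac (j : ℕ) : T3 :=
  X 0 * X 2 ^ j + C ((-1 : ℂ) ^ j) * X 1 * X 2 ^ (d - j)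

def ψ : MvPolynomial (Fin (d + 1)) ℂ →ₐ[ℂ] T3 :=
  aeval (fun j : Fin (d + 1) => fac d (j : ℕ))

def w (j : ℕ) : T3 :=
  X 0 * X 2 ^ (j - 1) - C ((-1 : ℂ) ^ (j - 1)) * X 1 * X 2 ^ (d - j - 1)

lemma fac_eq {j : ℕ} (hj1 : 1 ≤ j) (hj2 : j ≤ d - 1) :
    fac d j = X 2 * w d j := by
  obtain ⟨k, rfl⟩ : ∃ k, j = k + 1 := ⟨j - 1, by omega⟩
  obtain ⟨m, hm⟩ : ∃ m, d - (k + 1) = m + 1 := ⟨d - k - 2, by omega⟩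
  have hm' : d - (k + 1) - 1 = m := by omega
  rw [fac, w, hm]
  simp only [Nat.add_sub_cancel, pow_succ, C_mul, C_neg, C_1]
  ring

lemma fac_sub {j : ℕ} (hj1 : 1 ≤ j) (hj2 : j ≤ d - 1) :
    fac d (j + 1) - fac d (j - 1) = (X 2 ^ 2 - 1) * w d j := by
  obtain ⟨k, rfl⟩ : ∃ k, j = k + 1 := ⟨j - 1, by omega⟩
  obtain ⟨m, hm⟩ : ∃ m, d - (k + 1) = m + 1 := ⟨d - k - 2, by omega⟩
  have h1 : d - (k + 1 + 1) = m := by omega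
  have h2 : (k + 1 : ℕ) - 1 = k := by omega
  have h3 : d - k = m + 2 := by omega
  have h4 : d - (k + 1) - 1 = m := by omega
  rw [fac, fac, w, h1, h2, h3, h4]
  simp only [Nat.add_sub_cancel, pow_succ, C_mul, C_neg, C_1]
  ring

lemma psi_gen {a b : ℕ} (ha : a ≤ d - 2) (hb1 : 1 ≤ b) (hb2 : b ≤ d - 1)
    (hd : 2 ≤ d) (h1 : a + 1 < d + 1) (h2 : b + 1 < d + 1) (h3 : a + 2 < d + 1)
    (h4 : b < d + 1) (h5 : a < d + 1) (h6 : b - 1 < d + 1) :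
    ψ d (X (⟨a + 1, h1⟩ : Fin (d + 1)) * X ⟨b + 1, h2⟩
          - X ⟨a + 2, h3⟩ * X ⟨b, h4⟩
          + X ⟨a, h5⟩ * X ⟨b, h4⟩
          - X ⟨a + 1, h1⟩ * X ⟨b - 1, h6⟩) = 0 := by
  have e1 : fac d (a + 1) = X 2 * w d (a + 1) := fac_eq d (by omega) (by omega)
  have e2 : fac d b = X 2 * w d b := fac_eq d hb1 hb2
  have e3 : fac d (a + 1 + 1) - fac d (a + 1 - 1) = (X 2 ^ 2 - 1) * w d (a + 1) :=
    fac_sub d (by omega) (by omega)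
  have e4 : fac d (b + 1) - fac d (b - 1) = (X 2 ^ 2 - 1) * w d b :=
    fac_sub d hb1 hb2
  have ha2 : a + 1 + 1 = a + 2 := by omega
  have ha0 : a + 1 - 1 = a := by omega
  rw [ha2, ha0] at e3
  simp only [ψ, map_sub, map_add, map_mul, aeval_X]
  show fac d (a+1) * fac d (b+1) - fac d (a+2) * fac d b
      + fac d a * fac d b - fac d (a+1) * fac d (b-1) = 0
  linear_combination (fac d (b+1) - fac d (b-1)) * e1 - (fac d (a+2) - fac d a) * e2
    + (X 2 * w d (a+1)) * e4 - (X 2 * w d b) * e3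


def deg (σ : Fin (d + 1) →₀ ℕ) : ℕ := σ.sum fun _ e => e
def SS (σ : Fin (d + 1) →₀ ℕ) : ℕ := σ.sum fun i e => e * (i : ℕ)
def VV (σ : Fin (d + 1) →₀ ℕ) : ℕ := σ.sum fun i e => e * ((i : ℕ) * (i : ℕ))

def μ (σ : Fin (d + 1) →₀ ℕ) : ℕ :=
  (deg d σ * d - SS d σ) * (deg d σ * d * d + 1) + VV d σ

lemma deg_add (σ τ : Fin (d + 1) →₀ ℕ) : deg d (σ + τ) = deg d σ + deg d τ :=
  Finsupp.sum_add_index' (fun _ => rfl) (fun _ _ _ => rfl)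

lemma SS_add (σ τ : Fin (d + 1) →₀ ℕ) : SS d (σ + τ) = SS d σ + SS d τ :=
  Finsupp.sum_add_index' (fun _ => zero_mul _) (fun _ _ _ => add_mul _ _ _)

lemma VV_add (σ τ : Fin (d + 1) →₀ ℕ) : VV d (σ + τ) = VV d σ + VV d τ :=
  Finsupp.sum_add_index' (fun _ => zero_mul _) (fun _ _ _ => add_mul _ _ _)

lemma deg_single (i : Fin (d + 1)) (c : ℕ) : deg d (Finsupp.single i c) = c :=
  Finsupp.sum_single_index rfl

lemma SS_single (i : Fin (d + 1)) (c : ℕ) : SS d (Finsupp.single i c) = c * (i : ℕ) :=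
  Finsupp.sum_single_index (zero_mul _)

lemma VV_single (i : Fin (d + 1)) (c : ℕ) : VV d (Finsupp.single i c) = c * ((i : ℕ) * (i : ℕ)) :=
  Finsupp.sum_single_index (zero_mul _)

lemma deg_pair (τ : Fin (d + 1) →₀ ℕ) (p q : Fin (d + 1)) :
    deg d (τ + Finsupp.single p 1 + Finsupp.single q 1) = deg d τ + 2 := by
  rw [deg_add, deg_add, deg_single, deg_single]

lemma SS_pair (τ : Fin (d + 1) →₀ ℕ) (p q : Fin (d + 1)) :
    SS d (τ + Finsupp.single p 1 + Finsupp.single q 1) = SS d τ + (p : ℕ) + (q : ℕ) := by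
  rw [SS_add, SS_add, SS_single, SS_single, one_mul, one_mul]

lemma VV_pair (τ : Fin (d + 1) →₀ ℕ) (p q : Fin (d + 1)) :
    VV d (τ + Finsupp.single p 1 + Finsupp.single q 1)
      = VV d τ + (p : ℕ) * (p : ℕ) + (q : ℕ) * (q : ℕ) := by
  rw [VV_add, VV_add, VV_single, VV_single, one_mul, one_mul]

lemma SS_le (σ : Fin (d + 1) →₀ ℕ) : SS d σ ≤ deg d σ * d := by
  rw [SS, deg, Finsupp.sum, Finsupp.sum, Finset.sum_mul]
  exact Finset.sum_le_sum fun i _ => Nat.mul_le_mul_left _ (Fin.is_le i)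

/-- canonical exponent: no "reducible pair" -/
def Canon (σ : Fin (d + 1) →₀ ℕ) : Prop :=
  ¬ ∃ i j : Fin (d + 1), i ∈ σ.support ∧ j ∈ σ.support ∧
      (i : ℕ) + 2 ≤ (j : ℕ) ∧ (j : ℕ) ≤ d - 1

def CanonSet : Set (MvPolynomial (Fin (d + 1)) ℂ) :=
  {p | ∃ σ, Canon d σ ∧ p = monomial σ 1}

/-- arithmetic helper for sum-increasing moves -/
lemma arith_move (P D S V Δ : ℕ) (hS : S + 2 ≤ P) (hΔ : Δ < 2 * (P * D + 1)) :
    (P - (S + 2)) * (P * D + 1) + (V + Δ) < (P - S) * (P * D + 1) + V := by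
  have h : P - S = (P - (S + 2)) + 2 := by omega
  rw [h, add_mul]
  have : 2 * (P * D + 1) = 2 * (P * D) + 2 := by ring
  nlinarith [Nat.zero_le ((P - (S + 2)) * (P * D + 1))]

lemma monomial_mem (hd : 2 ≤ d) (I : Ideal (MvPolynomial (Fin (d + 1)) ℂ))
    (hgen : ∀ (a b : ℕ) (h1 : a + 1 < d + 1) (h2 : b + 1 < d + 1) (h3 : a + 2 < d + 1)
      (h4 : b < d + 1) (h5 : a < d + 1) (h6 : b - 1 < d + 1),
      a ≤ d - 2 → 1 ≤ b → b ≤ d - 1 →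
      (X (⟨a + 1, h1⟩ : Fin (d + 1)) * X ⟨b + 1, h2⟩
        - X ⟨a + 2, h3⟩ * X ⟨b, h4⟩
        + X ⟨a, h5⟩ * X ⟨b, h4⟩
        - X ⟨a + 1, h1⟩ * X ⟨b - 1, h6⟩) ∈ I) :
    ∀ σ : Fin (d + 1) →₀ ℕ,
      (monomial σ (1 : ℂ)) ∈ Submodule.restrictScalars ℂ I ⊔ Submodule.span ℂ (CanonSet d) := by
  suffices H : ∀ N (σ : Fin (d + 1) →₀ ℕ), μ d σ < N →
      (monomial σ (1 : ℂ)) ∈ Submodule.restrictScalars ℂ I ⊔ Submodule.span ℂ (CanonSet d) by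
    exact fun σ => H (μ d σ + 1) σ (Nat.lt_succ_self _)
  intro N
  induction N with
  | zero => exact fun σ h => absurd h (Nat.not_lt_zero _)
  | succ N ih =>
    intro σ hσ
    by_cases hcan : Canon d σ
    · exact Submodule.mem_sup_right (Submodule.subset_span ⟨σ, hcan, rfl⟩)
    · rw [Canon, not_not] at hcan
      obtain ⟨⟨a, hp5⟩, ⟨b, hp4⟩, hi, hj, hij0, hjd0⟩ := hcan
      have hij : a + 2 ≤ b := hij0
      have hjd : b ≤ d - 1 := hjd0
      have hb1 : 1 ≤ b := by omega
      have hp1 : a + 1 < d + 1 := by omega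
      have hp2 : b + 1 < d + 1 := by omega
      have hp3 : a + 2 < d + 1 := by omega
      have hp6 : b - 1 < d + 1 := by omega
      have hσi : σ ⟨a, hp5⟩ ≠ 0 := Finsupp.mem_support_iff.mp hi
      have hσj : σ ⟨b, hp4⟩ ≠ 0 := Finsupp.mem_support_iff.mp hj
      have hijne : (⟨a, hp5⟩ : Fin (d + 1)) ≠ ⟨b, hp4⟩ := by
        simp only [ne_eq, Fin.mk.injEq]; omega
      obtain ⟨τ, hστ⟩ : ∃ τ : Fin (d + 1) →₀ ℕ,
          σ = τ + Finsupp.single (⟨a, hp5⟩ : Fin (d + 1)) 1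
                + Finsupp.single (⟨b, hp4⟩ : Fin (d + 1)) 1 := by
        refine ⟨σ - Finsupp.single ⟨a, hp5⟩ 1 - Finsupp.single ⟨b, hp4⟩ 1, ?_⟩
        ext k
        simp only [Finsupp.add_apply, Finsupp.tsub_apply, Finsupp.single_apply]
        by_cases hki : (⟨a, hp5⟩ : Fin (d + 1)) = k
        · have hkj : ¬ ((⟨b, hp4⟩ : Fin (d + 1)) = k) := fun h => hijne (hki.trans h.symm)
          simp only [hki, hkj, if_true, if_false]
          rw [← hki]
          omega
        · by_cases hkj : (⟨b, hp4⟩ : Fin (d + 1)) = k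
          · simp only [hki, hkj, if_true, if_false]
            rw [← hkj]
            omega
          · simp [hki, hkj]
      have prodM : ∀ p q : Fin (d + 1),
          monomial τ (1 : ℂ) * (X p * X q)
            = monomial (τ + Finsupp.single p 1 + Finsupp.single q 1) 1 := by
        intro p q
        have hX : ∀ r : Fin (d + 1), (X r : MvPolynomial (Fin (d + 1)) ℂ)
            = monomial (Finsupp.single r 1) 1 := fun r => rfl
        rw [hX p, hX q, ← mul_assoc, monomial_mul, monomial_mul, mul_one, mul_one]
      have hg : monomial τ (1 : ℂ) *
          (X (⟨a + 1, hp1⟩ : Fin (d + 1)) * X ⟨b + 1, hp2⟩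
            - X ⟨a + 2, hp3⟩ * X ⟨b, hp4⟩
            + X ⟨a, hp5⟩ * X ⟨b, hp4⟩
            - X ⟨a + 1, hp1⟩ * X ⟨b - 1, hp6⟩)
          = monomial (τ + Finsupp.single (⟨a + 1, hp1⟩ : Fin (d + 1)) 1
                + Finsupp.single (⟨b + 1, hp2⟩ : Fin (d + 1)) 1) 1
            - monomial (τ + Finsupp.single (⟨a + 2, hp3⟩ : Fin (d + 1)) 1
                + Finsupp.single (⟨b, hp4⟩ : Fin (d + 1)) 1) 1
            + monomial σ 1
            - monomial (τ + Finsupp.single (⟨a + 1, hp1⟩ : Fin (d + 1)) 1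
                + Finsupp.single (⟨b - 1, hp6⟩ : Fin (d + 1)) 1) 1 := by
        rw [mul_sub, mul_add, mul_sub, prodM, prodM, prodM, prodM, ← hστ]
      have key : (monomial σ (1 : ℂ))
          = monomial τ 1 *
            (X (⟨a + 1, hp1⟩ : Fin (d + 1)) * X ⟨b + 1, hp2⟩
              - X ⟨a + 2, hp3⟩ * X ⟨b, hp4⟩
              + X ⟨a, hp5⟩ * X ⟨b, hp4⟩
              - X ⟨a + 1, hp1⟩ * X ⟨b - 1, hp6⟩)
            - monomial (τ + Finsupp.single (⟨a + 1, hp1⟩ : Fin (d + 1)) 1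
                + Finsupp.single (⟨b + 1, hp2⟩ : Fin (d + 1)) 1) 1
            + monomial (τ + Finsupp.single (⟨a + 2, hp3⟩ : Fin (d + 1)) 1
                + Finsupp.single (⟨b, hp4⟩ : Fin (d + 1)) 1) 1
            + monomial (τ + Finsupp.single (⟨a + 1, hp1⟩ : Fin (d + 1)) 1
                + Finsupp.single (⟨b - 1, hp6⟩ : Fin (d + 1)) 1) 1 := by
        linear_combination -hg
      -- measure bookkeeping
      have hbig : ∀ Δ : ℕ, Δ ≤ 4 * d + 2 → Δ < 2 * ((deg d τ + 2) * d * d + 1) := by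
        intro Δ hΔ
        have h1 : 2 * d ≤ (deg d τ + 2) * d := Nat.mul_le_mul_right d (by omega)
        have h2 : 2 * d * d ≤ (deg d τ + 2) * d * d := Nat.mul_le_mul_right d h1
        nlinarith
      have hmuσ : μ d σ = ((deg d τ + 2) * d - (SS d τ + a + b)) * ((deg d τ + 2) * d * d + 1)
          + (VV d τ + a * a + b * b) := by
        rw [μ, hστ, deg_pair, SS_pair, VV_pair]
      have hmu1 : μ d (τ + Finsupp.single (⟨a + 1, hp1⟩ : Fin (d + 1)) 1
            + Finsupp.single (⟨b + 1, hp2⟩ : Fin (d + 1)) 1) < μ d σ := by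
        have hb' : SS d (τ + Finsupp.single (⟨a + 1, hp1⟩ : Fin (d + 1)) 1
            + Finsupp.single (⟨b + 1, hp2⟩ : Fin (d + 1)) 1) ≤ (deg d τ + 2) * d := by
          rw [← deg_pair d τ (⟨a + 1, hp1⟩ : Fin (d + 1)) ⟨b + 1, hp2⟩]
          exact SS_le d _
        rw [SS_pair] at hb'
        rw [μ, deg_pair, SS_pair, VV_pair, hmuσ]
        have hA : SS d τ + ((⟨a + 1, hp1⟩ : Fin (d + 1)) : ℕ) + ((⟨b + 1, hp2⟩ : Fin (d + 1)) : ℕ)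
            = (SS d τ + a + b) + 2 := by
          show SS d τ + (a + 1) + (b + 1) = (SS d τ + a + b) + 2
          omega
        have hB : VV d τ + ((⟨a + 1, hp1⟩ : Fin (d + 1)) : ℕ) * ((⟨a + 1, hp1⟩ : Fin (d + 1)) : ℕ)
              + ((⟨b + 1, hp2⟩ : Fin (d + 1)) : ℕ) * ((⟨b + 1, hp2⟩ : Fin (d + 1)) : ℕ)
            = (VV d τ + a * a + b * b) + (2 * a + 2 * b + 2) := by
          show VV d τ + (a + 1) * (a + 1) + (b + 1) * (b + 1)
            = (VV d τ + a * a + b * b) + (2 * a + 2 * b + 2)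
          ring
        rw [hA, hB]
        refine arith_move _ _ _ _ _ ?_ (hbig _ (by omega))
        have : SS d τ + (a + 1) + (b + 1) ≤ (deg d τ + 2) * d := hb'
        omega
      have hmu2 : μ d (τ + Finsupp.single (⟨a + 2, hp3⟩ : Fin (d + 1)) 1
            + Finsupp.single (⟨b, hp4⟩ : Fin (d + 1)) 1) < μ d σ := by
        have hb' : SS d (τ + Finsupp.single (⟨a + 2, hp3⟩ : Fin (d + 1)) 1
            + Finsupp.single (⟨b, hp4⟩ : Fin (d + 1)) 1) ≤ (deg d τ + 2) * d := by
          rw [← deg_pair d τ (⟨a + 2, hp3⟩ : Fin (d + 1)) ⟨b, hp4⟩]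
          exact SS_le d _
        rw [SS_pair] at hb'
        rw [μ, deg_pair, SS_pair, VV_pair, hmuσ]
        have hA : SS d τ + ((⟨a + 2, hp3⟩ : Fin (d + 1)) : ℕ) + ((⟨b, hp4⟩ : Fin (d + 1)) : ℕ)
            = (SS d τ + a + b) + 2 := by
          show SS d τ + (a + 2) + b = (SS d τ + a + b) + 2
          omega
        have hB : VV d τ + ((⟨a + 2, hp3⟩ : Fin (d + 1)) : ℕ) * ((⟨a + 2, hp3⟩ : Fin (d + 1)) : ℕ)
              + ((⟨b, hp4⟩ : Fin (d + 1)) : ℕ) * ((⟨b, hp4⟩ : Fin (d + 1)) : ℕ)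
            = (VV d τ + a * a + b * b) + (4 * a + 4) := by
          show VV d τ + (a + 2) * (a + 2) + b * b = (VV d τ + a * a + b * b) + (4 * a + 4)
          ring
        rw [hA, hB]
        refine arith_move _ _ _ _ _ ?_ (hbig _ (by omega))
        have : SS d τ + (a + 2) + b ≤ (deg d τ + 2) * d := hb'
        omega
      have hmu3 : μ d (τ + Finsupp.single (⟨a + 1, hp1⟩ : Fin (d + 1)) 1
            + Finsupp.single (⟨b - 1, hp6⟩ : Fin (d + 1)) 1) < μ d σ := by
        rw [μ, deg_pair, SS_pair, VV_pair, hmuσ]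
        have hA : SS d τ + ((⟨a + 1, hp1⟩ : Fin (d + 1)) : ℕ) + ((⟨b - 1, hp6⟩ : Fin (d + 1)) : ℕ)
            = SS d τ + a + b := by
          show SS d τ + (a + 1) + (b - 1) = SS d τ + a + b
          omega
        rw [hA]
        apply Nat.add_lt_add_left
        show VV d τ + (a + 1) * (a + 1) + (b - 1) * (b - 1) < VV d τ + a * a + b * b
        obtain ⟨b', rfl⟩ : ∃ b', b = b' + 1 := ⟨b - 1, by omega⟩
        have hab' : a < b' := by omega
        have hbb : b' + 1 - 1 = b' := by omega
        rw [hbb]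
        nlinarith
      have MI : monomial τ (1 : ℂ) *
          (X (⟨a + 1, hp1⟩ : Fin (d + 1)) * X ⟨b + 1, hp2⟩
            - X ⟨a + 2, hp3⟩ * X ⟨b, hp4⟩
            + X ⟨a, hp5⟩ * X ⟨b, hp4⟩
            - X ⟨a + 1, hp1⟩ * X ⟨b - 1, hp6⟩) ∈ I :=
        I.mul_mem_left _ (hgen a b hp1 hp2 hp3 hp4 hp5 hp6 (by omega) hb1 hjd)
      rw [key]
      refine Submodule.add_mem _ (Submodule.add_mem _ (Submodule.sub_mem _ ?_ ?_) ?_) ?_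
      · exact Submodule.mem_sup_left ((Submodule.restrictScalars_mem ℂ I _).mpr MI)
      · exact ih _ (by omega)
      · exact ih _ (by omega)
      · exact ih _ (by omega)


/-! ### Part 3: independence of canonical rows -/

abbrev W2 := Polynomial (Polynomial ℂ)

/-- the row of a canonical exponent -/
def Rrow (σ : Fin (d + 1) →₀ ℕ) : T3 := σ.prod fun i e => fac d (i : ℕ) ^ e

lemma psi_monomial (σ : Fin (d + 1) →₀ ℕ) : ψ d (monomial σ 1) = Rrow d σ := by
  rw [ψ, aeval_monomial, map_one, one_mul, Rrow]

def Θ : T3 →ₐ[ℂ] W2 :=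
  aeval ![Polynomial.C Polynomial.X,
    Polynomial.C (Polynomial.C ((-1 : ℂ) ^ (d + 1))) * (Polynomial.C Polynomial.X * Polynomial.X ^ d),
    Polynomial.X]

def Pfac (j : ℕ) : W2 :=
  Polynomial.C Polynomial.X * Polynomial.X ^ j
    - Polynomial.C (Polynomial.C ((-1 : ℂ) ^ (j + d))) *
        (Polynomial.C Polynomial.X * Polynomial.X ^ (2 * d - j))

lemma algebraMap_W2 (c : ℂ) : algebraMap ℂ W2 c = Polynomial.C (Polynomial.C c) := by
  rfl

lemma theta_fac (j : ℕ) (hj : j ≤ d) : Θ d (fac d j) = Pfac d j := by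
  rw [fac, Θ, Pfac]
  simp only [map_add, map_mul, map_pow, aeval_X, algHom_C]
  simp only [Matrix.cons_val_zero, Matrix.cons_val_one, Matrix.head_cons, Matrix.cons_val_two,
    Matrix.tail_cons]
  have hA : (Polynomial.C (Polynomial.C (-1 : ℂ)) : W2) = -1 := by
    simp
  rw [algebraMap_W2, hA]
  have h2d : 2 * d - j = d + (d - j) := by omega
  rw [h2d, pow_add]
  have hsgn : ((-1 : W2)) ^ j * (-1 : W2) ^ (d + 1) = -(-1 : W2) ^ (j + d) := by
    rw [pow_add, pow_add, pow_one]
    ring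
  linear_combination (Polynomial.C Polynomial.X * Polynomial.X ^ d * Polynomial.X ^ (d - j)) * hsgn

lemma Pfac_dd : Pfac d d = 0 := by
  rw [Pfac]
  have h1 : 2 * d - d = d := by omega
  have h2 : ((-1 : ℂ) ^ (d + d)) = 1 := Even.neg_one_pow ⟨d, rfl⟩
  rw [h1, h2]
  simp

def Qfac (j : ℕ) : W2 :=
  Polynomial.C Polynomial.X
    - Polynomial.C (Polynomial.C ((-1 : ℂ) ^ (j + d))) *
        (Polynomial.C Polynomial.X * Polynomial.X ^ (2 * (d - j)))

lemma Pfac_factor (j : ℕ) (hj : j ≤ d) : Pfac d j = Polynomial.X ^ j * Qfac d j := by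
  rw [Pfac, Qfac]
  have h : 2 * d - j = j + 2 * (d - j) := by omega
  rw [h, pow_add]
  ring

lemma Qfac_coeff_zero (j : ℕ) (hj : j < d) : (Qfac d j).coeff 0 = Polynomial.X := by
  rw [Qfac]
  have hpos : 0 < 2 * (d - j) := by omega
  rw [Polynomial.coeff_sub, Polynomial.coeff_C_mul, Polynomial.coeff_C_mul,
    Polynomial.coeff_X_pow, Polynomial.coeff_C_zero, if_neg (by omega)]
  ring

lemma Qfac_ntd (j : ℕ) (hj : j < d) : (Qfac d j).natTrailingDegree = 0 :=
  Polynomial.natTrailingDegree_eq_zero.mpr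
    (Or.inr (by rw [Qfac_coeff_zero d j hj]; exact Polynomial.X_ne_zero))

lemma Qfac_ne (j : ℕ) (hj : j < d) : Qfac d j ≠ 0 := by
  intro h
  have := Qfac_coeff_zero d j hj
  rw [h] at this
  simp only [Polynomial.coeff_zero] at this
  exact Polynomial.X_ne_zero this.symm

lemma Qfac_tc (j : ℕ) (hj : j < d) : (Qfac d j).trailingCoeff = Polynomial.X := by
  rw [Polynomial.trailingCoeff, Qfac_ntd d j hj, Qfac_coeff_zero d j hj]

lemma Pfac_ne (j : ℕ) (hj : j < d) : Pfac d j ≠ 0 := by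
  rw [Pfac_factor d j (le_of_lt hj)]
  exact mul_ne_zero (pow_ne_zero _ Polynomial.X_ne_zero) (Qfac_ne d j hj)

lemma Pfac_ntd (j : ℕ) (hj : j < d) : (Pfac d j).natTrailingDegree = j := by
  rw [Pfac_factor d j (le_of_lt hj),
    Polynomial.natTrailingDegree_mul (pow_ne_zero _ Polynomial.X_ne_zero) (Qfac_ne d j hj),
    Polynomial.natTrailingDegree_X_pow, Qfac_ntd d j hj, add_zero]

lemma Pfac_tc (j : ℕ) (hj : j < d) : (Pfac d j).trailingCoeff = Polynomial.X := by
  rw [Pfac_factor d j (le_of_lt hj), Polynomial.trailingCoeff_mul, Qfac_tc d j hj]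
  have : (Polynomial.X ^ j : W2).trailingCoeff = 1 := by
    rw [Polynomial.trailingCoeff, Polynomial.natTrailingDegree_X_pow, Polynomial.coeff_X_pow,
      if_pos rfl]
  rw [this, one_mul]

lemma pow_ntd {p : W2} (hp : p ≠ 0) (e : ℕ) : (p ^ e).natTrailingDegree = e * p.natTrailingDegree := by
  induction e with
  | zero => simp
  | succ e ih =>
    rw [pow_succ, Polynomial.natTrailingDegree_mul (pow_ne_zero _ hp) hp, ih]
    ring

lemma pow_tc (p : W2) (e : ℕ) : (p ^ e).trailingCoeff = p.trailingCoeff ^ e := by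
  induction e with
  | zero => simp [Polynomial.trailingCoeff]
  | succ e ih => rw [pow_succ, pow_succ, Polynomial.trailingCoeff_mul, ih]

lemma theta_Rrow (σ : Fin (d + 1) →₀ ℕ) :
    Θ d (Rrow d σ) = ∏ i ∈ σ.support, Pfac d (i : ℕ) ^ σ i := by
  rw [Rrow, map_finsuppProd, Finsupp.prod]
  exact Finset.prod_congr rfl fun i _ => by rw [map_pow, theta_fac d _ (Fin.is_le i)]

lemma theta_Rrow_zero (σ : Fin (d + 1) →₀ ℕ) (hσd : σ (Fin.last d) ≠ 0) :
    Θ d (Rrow d σ) = 0 := by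
  rw [theta_Rrow]
  apply Finset.prod_eq_zero (Finsupp.mem_support_iff.mpr hσd)
  rw [Fin.val_last, Pfac_dd, zero_pow hσd]

lemma prod_trailing (s : Finset (Fin (d + 1))) (g : Fin (d + 1) → ℕ)
    (h : ∀ i ∈ s, (i : ℕ) < d) :
    (∏ i ∈ s, Pfac d (i : ℕ) ^ g i) ≠ 0 ∧
    (∏ i ∈ s, Pfac d (i : ℕ) ^ g i).natTrailingDegree = ∑ i ∈ s, g i * (i : ℕ) ∧
    (∏ i ∈ s, Pfac d (i : ℕ) ^ g i).trailingCoeff = Polynomial.X ^ (∑ i ∈ s, g i) := by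
  induction s using Finset.induction_on with
  | empty => simp [Polynomial.trailingCoeff]
  | @insert a s' ha ih =>
    obtain ⟨ih1, ih2, ih3⟩ := ih fun i hi => h i (Finset.mem_insert_of_mem hi)
    have haa : (a : ℕ) < d := h a (Finset.mem_insert_self a s')
    have hfa : Pfac d (a : ℕ) ^ g a ≠ 0 := pow_ne_zero _ (Pfac_ne d _ haa)
    rw [Finset.prod_insert ha, Finset.sum_insert ha, Finset.sum_insert ha]
    refine ⟨mul_ne_zero hfa ih1, ?_, ?_⟩
    · rw [Polynomial.natTrailingDegree_mul hfa ih1, ih2,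
        pow_ntd (Pfac_ne d _ haa) (g a), Pfac_ntd d _ haa]
    · rw [Polynomial.trailingCoeff_mul, ih3, pow_tc, Pfac_tc d _ haa, pow_add]

lemma row_support_lt (σ : Fin (d + 1) →₀ ℕ) (hσd : σ (Fin.last d) = 0) :
    ∀ i ∈ σ.support, (i : ℕ) < d := by
  intro i hi
  rcases Nat.lt_or_ge (i : ℕ) d with h | h
  · exact h
  · exfalso
    have : i = Fin.last d := by
      ext
      have := Fin.is_le i
      simp only [Fin.val_last]
      omega
    rw [this] at hi
    exact (Finsupp.mem_support_iff.mp hi) hσd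

lemma theta_Rrow_ne (σ : Fin (d + 1) →₀ ℕ) (hσd : σ (Fin.last d) = 0) :
    Θ d (Rrow d σ) ≠ 0 := by
  rw [theta_Rrow]
  exact (prod_trailing d _ σ (row_support_lt d σ hσd)).1

lemma theta_Rrow_ntd (σ : Fin (d + 1) →₀ ℕ) (hσd : σ (Fin.last d) = 0) :
    (Θ d (Rrow d σ)).natTrailingDegree = SS d σ := by
  rw [theta_Rrow]
  exact (prod_trailing d _ σ (row_support_lt d σ hσd)).2.1

lemma theta_Rrow_tc (σ : Fin (d + 1) →₀ ℕ) (hσd : σ (Fin.last d) = 0) :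
    (Θ d (Rrow d σ)).trailingCoeff = Polynomial.X ^ (deg d σ) := by
  rw [theta_Rrow]
  exact (prod_trailing d _ σ (row_support_lt d σ hσd)).2.2

lemma apply_le_deg (σ : Fin (d + 1) →₀ ℕ) (i : Fin (d + 1)) : σ i ≤ deg d σ := by
  by_cases hi : i ∈ σ.support
  · exact Finset.single_le_sum (fun _ _ => Nat.zero_le _) hi
  · rw [Finsupp.notMem_support_iff.mp hi]
    exact Nat.zero_le _

lemma deg_eq_zero (σ : Fin (d + 1) →₀ ℕ) (h : deg d σ = 0) : σ = 0 := by
  ext i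
  have := apply_le_deg d σ i
  simp only [Finsupp.coe_zero, Pi.zero_apply]
  omega

lemma canon_rep (σ : Fin (d + 1) →₀ ℕ) (hc : Canon d σ) (hσd : σ (Fin.last d) = 0)
    (hne : σ ≠ 0) :
    ∃ (m A B : ℕ) (hm : m < d + 1) (hm1 : m + 1 < d + 1), 1 ≤ A ∧
      σ = Finsupp.single ⟨m, hm⟩ A + Finsupp.single ⟨m + 1, hm1⟩ B := by
  have hsupp : σ.support.Nonempty := Finsupp.support_nonempty_iff.mpr hne
  set i0 := σ.support.min' hsupp with hi0
  have hi0mem : i0 ∈ σ.support := σ.support.min'_mem hsupp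
  have hi0lt : (i0 : ℕ) < d := row_support_lt d σ hσd i0 hi0mem
  have hm : (i0 : ℕ) < d + 1 := by omega
  have hm1 : (i0 : ℕ) + 1 < d + 1 := by omega
  have hvals : ∀ k ∈ σ.support, (k : ℕ) = (i0 : ℕ) ∨ (k : ℕ) = (i0 : ℕ) + 1 := by
    intro k hk
    have hge : i0 ≤ k := σ.support.min'_le k hk
    have hge' : (i0 : ℕ) ≤ (k : ℕ) := hge
    have hklt : (k : ℕ) < d := row_support_lt d σ hσd k hk
    by_contra hcon
    push_neg at hcon
    exact hc ⟨i0, k, hi0mem, hk, by omega, by omega⟩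
  refine ⟨(i0 : ℕ), σ i0, σ ⟨(i0 : ℕ) + 1, hm1⟩, hm, hm1,
    Nat.one_le_iff_ne_zero.mpr (Finsupp.mem_support_iff.mp hi0mem), ?_⟩
  have hi0eq : (⟨(i0 : ℕ), hm⟩ : Fin (d + 1)) = i0 := by ext; rfl
  ext k
  rw [Finsupp.add_apply, Finsupp.single_apply, Finsupp.single_apply]
  by_cases h1 : (⟨(i0 : ℕ), hm⟩ : Fin (d + 1)) = k
  · have h2 : ¬ ((⟨(i0 : ℕ) + 1, hm1⟩ : Fin (d + 1)) = k) := by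
      rw [← h1]
      intro h
      have := congrArg Fin.val h
      simp at this
    rw [if_pos h1, if_neg h2, ← h1, hi0eq, add_zero]
  · by_cases h2 : (⟨(i0 : ℕ) + 1, hm1⟩ : Fin (d + 1)) = k
    · rw [if_pos h2, if_neg h1, ← h2, zero_add]
    · rw [if_neg h1, if_neg h2, add_zero]
      by_contra hσk
      have hk : k ∈ σ.support := Finsupp.mem_support_iff.mpr hσk
      rcases hvals k hk with h | h
      · exact h1 (by ext; exact h.symm)
      · exact h2 (by ext; exact h.symm)

lemma canon_unique (σ σ' : Fin (d + 1) →₀ ℕ) (hc : Canon d σ) (hc' : Canon d σ')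
    (hσd : σ (Fin.last d) = 0) (hσ'd : σ' (Fin.last d) = 0)
    (hdeg : deg d σ = deg d σ') (hss : SS d σ = SS d σ') : σ = σ' := by
  by_cases hz : σ = 0
  · subst hz
    have : deg d σ' = 0 := by rw [← hdeg]; simp [deg]
    exact (deg_eq_zero d σ' this).symm
  by_cases hz' : σ' = 0
  · subst hz'
    exfalso
    apply hz
    apply deg_eq_zero d σ
    rw [hdeg]; simp [deg]
  obtain ⟨m, A, B, hm, hm1, hA, hrep⟩ := canon_rep d σ hc hσd hz
  obtain ⟨m', A', B', hm', hm1', hA', hrep'⟩ := canon_rep d σ' hc' hσ'd hz'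
  have hdegσ : deg d σ = A + B := by
    rw [hrep, deg_add, deg_single, deg_single]
  have hdegσ' : deg d σ' = A' + B' := by
    rw [hrep', deg_add, deg_single, deg_single]
  have hssσ : SS d σ = (A + B) * m + B := by
    rw [hrep, SS_add, SS_single, SS_single]
    show A * m + B * (m + 1) = (A + B) * m + B
    ring
  have hssσ' : SS d σ' = (A' + B') * m' + B' := by
    rw [hrep', SS_add, SS_single, SS_single]
    show A' * m' + B' * (m' + 1) = (A' + B') * m' + B'
    ring
  set n := A + B with hn
  have hnn : A' + B' = n := by omega
  have heq : n * m + B = n * m' + B' := by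
    have h0 : (A + B) * m + B = (A' + B') * m' + B' := by
      rw [← hssσ, ← hssσ', hss]
    rw [hnn, ← hn] at h0
    exact h0
  have hBn : B < n := by omega
  have hB'n : B' < n := by omega
  have hdiv : ∀ (x y : ℕ), y < n → (n * x + y) / n = x := by
    intro x y hy
    rw [Nat.mul_add_div (by omega), Nat.div_eq_of_lt hy, add_zero]
  have hmm : m = m' := by
    have := congrArg (· / n) heq
    simpa [hdiv m B hBn, hdiv m' B' hB'n] using this
  subst hmm
  have hBB : B = B' := by
    apply Nat.add_left_cancel
    exact heq
  have hAA : A = A' := by omega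
  rw [hrep, hrep', hAA, hBB]

lemma phase1 (c : (Fin (d + 1) →₀ ℕ) →₀ ℂ) (hc : ∀ σ ∈ c.support, Canon d σ)
    (heq : (c.sum fun σ r => r • Rrow d σ) = 0) :
    ∀ σ₀ ∈ c.support, σ₀ (Fin.last d) = 0 → c σ₀ = 0 := by
  have h0 : ∑ σ ∈ c.support, c σ • Θ d (Rrow d σ) = 0 := by
    have h1 := congrArg (Θ d) heq
    rw [map_finsuppSum, map_zero] at h1
    rw [← h1, Finsupp.sum]
    exact Finset.sum_congr rfl fun σ _ => (map_smul (Θ d) _ _).symm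
  suffices H : ∀ s, ∀ σ₀ ∈ c.support, σ₀ (Fin.last d) = 0 → SS d σ₀ = s → c σ₀ = 0 by
    intro σ₀ h1 h2
    exact H (SS d σ₀) σ₀ h1 h2 rfl
  intro s
  induction s using Nat.strong_induction_on with
  | _ s ih =>
    intro σ₀ hmem hσ0d hSS0
    have hcoeff : ∑ σ ∈ c.support, c σ * (((Θ d (Rrow d σ)).coeff s).coeff (deg d σ₀)) = 0 := by
      have h1 := congrArg (fun p : W2 => (p.coeff s).coeff (deg d σ₀)) h0
      simp only [Polynomial.finset_sum_coeff, Polynomial.coeff_zero] at h1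
      rw [← h1]
      exact Finset.sum_congr rfl fun σ _ => by
        rw [Polynomial.coeff_smul, Polynomial.coeff_smul, smul_eq_mul]
    rw [Finset.sum_eq_single σ₀ ?side1 ?side2] at hcoeff
    case side2 => intro h; exact absurd hmem h
    case side1 =>
      intro σ hσmem hne
      by_cases hlast : σ (Fin.last d) = 0
      · rcases Nat.lt_trichotomy (SS d σ) s with hlt | heqs | hgt
        · rw [ih (SS d σ) hlt σ hσmem hlast rfl, zero_mul]
        · by_cases hdeg : deg d σ = deg d σ₀
          · exact absurd (canon_unique d σ σ₀ (hc σ hσmem) (hc σ₀ hmem) hlast hσ0d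
              (by rw [hdeg]) (by rw [heqs, hSS0])) hne
          · have h2 : (Θ d (Rrow d σ)).coeff s = Polynomial.X ^ (deg d σ) := by
              rw [← heqs, ← theta_Rrow_ntd d σ hlast, ← Polynomial.trailingCoeff,
                theta_Rrow_tc d σ hlast]
            rw [h2, Polynomial.coeff_X_pow, if_neg (fun h => hdeg h.symm), mul_zero]
        · have h2 : (Θ d (Rrow d σ)).coeff s = 0 :=
            Polynomial.coeff_eq_zero_of_lt_natTrailingDegree
              (by rw [theta_Rrow_ntd d σ hlast]; omega)
          rw [h2, Polynomial.coeff_zero, mul_zero]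
      · rw [theta_Rrow_zero d σ hlast]
        simp
    have h3 : (Θ d (Rrow d σ₀)).coeff s = Polynomial.X ^ (deg d σ₀) := by
      rw [← hSS0, ← theta_Rrow_ntd d σ₀ hσ0d, ← Polynomial.trailingCoeff,
        theta_Rrow_tc d σ₀ hσ0d]
    rw [h3, Polynomial.coeff_X_pow, if_pos rfl, mul_one] at hcoeff
    exact hcoeff

lemma canon_mono (σ τ : Fin (d + 1) →₀ ℕ) (hsub : τ.support ⊆ σ.support)
    (hc : Canon d σ) : Canon d τ := by
  intro ⟨i, j, hi, hj, hij, hjd⟩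
  exact hc ⟨i, j, hsub hi, hsub hj, hij, hjd⟩

lemma fac_dd_ne : fac d d ≠ 0 := by
  intro h
  have h1 := congrArg (aeval ![(0 : ℂ), (-1 : ℂ) ^ d, 1]) h
  simp only [fac, map_add, map_mul, map_pow, aeval_X, aeval_C, map_zero,
    Matrix.cons_val_zero, Matrix.cons_val_one, Matrix.head_cons, Matrix.cons_val_two,
    Matrix.tail_cons, zero_mul, one_pow, mul_one, zero_add, Algebra.algebraMap_self_apply] at h1
  rw [← pow_add] at h1
  exact pow_ne_zero _ (neg_ne_zero.mpr one_ne_zero) h1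

lemma Rrow_add_single (τ : Fin (d + 1) →₀ ℕ) (i : Fin (d + 1)) :
    Rrow d (τ + Finsupp.single i 1) = Rrow d τ * fac d (i : ℕ) := by
  rw [Rrow, Rrow, Finsupp.prod_add_index' (fun j => pow_zero _) (fun j e1 e2 => pow_add _ _ _)]
  congr 1
  have : (Finsupp.single i 1).prod (fun j e => fac d (j : ℕ) ^ e) = fac d (i : ℕ) ^ 1 :=
    Finsupp.prod_single_index (pow_zero _)
  rw [pow_one] at this
  exact this

lemma indep : ∀ (c : (Fin (d + 1) →₀ ℕ) →₀ ℂ), (∀ σ ∈ c.support, Canon d σ) →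
    (c.sum fun σ r => r • Rrow d σ) = 0 → c = 0 := by
  suffices H : ∀ M (c : (Fin (d + 1) →₀ ℕ) →₀ ℂ), (∑ σ ∈ c.support, (deg d σ + 1)) < M →
      (∀ σ ∈ c.support, Canon d σ) → (c.sum fun σ r => r • Rrow d σ) = 0 → c = 0 by
    intro c hc heq
    exact H (∑ σ ∈ c.support, (deg d σ + 1) + 1) c (Nat.lt_succ_self _) hc heq
  intro M
  induction M with
  | zero => exact fun c h => absurd h (Nat.not_lt_zero _)
  | succ M ih =>
    intro c hM hc heq
    by_cases hzc : c = 0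
    · exact hzc
    have hlast : ∀ σ ∈ c.support, σ (Fin.last d) ≠ 0 := by
      intro σ hσ h0
      exact (Finsupp.mem_support_iff.mp hσ) (phase1 d c hc heq σ hσ h0)
    have hcanc : ∀ σ ∈ c.support, σ - Finsupp.single (Fin.last d) 1
        + Finsupp.single (Fin.last d) 1 = σ := by
      intro σ hσ
      exact tsub_add_cancel_of_le (Finsupp.single_le_iff.mpr
        (Nat.one_le_iff_ne_zero.mpr (hlast σ hσ)))
    have hbij : Set.BijOn (fun τ : Fin (d + 1) →₀ ℕ => τ + Finsupp.single (Fin.last d) 1)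
        ((fun τ : Fin (d + 1) →₀ ℕ => τ + Finsupp.single (Fin.last d) 1) ⁻¹' ↑c.support)
        ↑c.support := by
      refine ⟨fun τ hτ => hτ, (add_left_injective _).injOn, ?_⟩
      intro σ hσ
      refine ⟨σ - Finsupp.single (Fin.last d) 1, ?_, hcanc σ hσ⟩
      show (fun τ : Fin (d + 1) →₀ ℕ => τ + Finsupp.single (Fin.last d) 1)
          (σ - Finsupp.single (Fin.last d) 1) ∈ (↑c.support : Set _)
      simp only
      rw [hcanc σ hσ]
      exact hσ
    set c₂ := Finsupp.comapDomain _ c hbij.injOn with hc₂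
    have htrans : (c₂.sum fun τ r => r • Rrow d τ) * fac d d = 0 := by
      have h1 : c.sum (fun σ r => r • Rrow d σ)
          = c₂.sum ((fun σ r => r • Rrow d σ) ∘ (fun τ => τ + Finsupp.single (Fin.last d) 1)) :=
        (Finsupp.sum_comapDomain _ c _ hbij).symm
      have h2 : c₂.sum ((fun σ r => r • Rrow d σ) ∘ (fun τ => τ + Finsupp.single (Fin.last d) 1))
          = c₂.sum fun τ r => (r • Rrow d τ) * fac d d := by
        apply Finsupp.sum_congr
        intro τ _
        show c₂ τ • Rrow d (τ + Finsupp.single (Fin.last d) 1) = c₂ τ • Rrow d τ * fac d d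
        rw [Rrow_add_single, Fin.val_last, smul_mul_assoc]
      rw [h1, h2] at heq
      rw [Finsupp.sum_mul]
      exact heq
    have hsum2 : (c₂.sum fun τ r => r • Rrow d τ) = 0 := by
      rcases mul_eq_zero.mp htrans with h | h
      · exact h
      · exact absurd h (fac_dd_ne d)
    have hcan2 : ∀ τ ∈ c₂.support, Canon d τ := by
      intro τ hτ
      rw [hc₂, Finsupp.comapDomain_support, Finset.mem_preimage] at hτ
      refine canon_mono d _ τ ?_ (hc _ hτ)
      intro k hk
      rw [Finsupp.mem_support_iff] at hk ⊢
      rw [Finsupp.add_apply]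
      omega
    have hmeas : (∑ τ ∈ c₂.support, (deg d τ + 1)) < M := by
      have h1 : (∑ τ ∈ c₂.support, (deg d τ + 1))
          = ∑ σ ∈ c.support, deg d σ := by
        rw [hc₂, Finsupp.comapDomain_support]
        rw [← Finset.sum_preimage_of_bij _ c.support hbij (fun σ => deg d σ)]
        apply Finset.sum_congr rfl
        intro τ _
        show deg d τ + 1 = deg d (τ + Finsupp.single (Fin.last d) 1)
        rw [deg_add, deg_single]
      have h2 : 1 ≤ c.support.card :=
        Finset.card_pos.mpr (Finsupp.support_nonempty_iff.mpr hzc)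
      have h3 : (∑ σ ∈ c.support, (deg d σ + 1))
          = (∑ σ ∈ c.support, deg d σ) + c.support.card := by
        rw [Finset.sum_add_distrib, Finset.sum_const, smul_eq_mul, mul_one]
      omega
    have hc2z : c₂ = 0 := ih c₂ hmeas hcan2 hsum2
    exact Finsupp.eq_zero_of_comapDomain_eq_zero _ c hbij hc2z

/-! ### Part 4: glue -/

lemma span_eq_ker (hd : 2 ≤ d) (I : Ideal (MvPolynomial (Fin (d + 1)) ℂ))
    (hI : I = Ideal.span {p | ∃ a b : ℕ,
        ∃ (_ : a ≤ d - 2) (_ : 1 ≤ b) (_ : b ≤ d - 1),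
        p = X (⟨a + 1, by have := 0; omega⟩ : Fin (d + 1)) * X ⟨b + 1, by have := 0; omega⟩
            - X ⟨a + 2, by have := 0; omega⟩ * X ⟨b, by have := 0; omega⟩
            + X ⟨a, by have := 0; omega⟩ * X ⟨b, by have := 0; omega⟩
            - X ⟨a + 1, by have := 0; omega⟩ * X ⟨b - 1, by have := 0; omega⟩}) :
    I = RingHom.ker (ψ d).toRingHom := by
  have hker : I ≤ RingHom.ker (ψ d).toRingHom := by
    rw [hI, Ideal.span_le]
    rintro p ⟨a, b, ha, hb1, hb2, rfl⟩
    rw [SetLike.mem_coe, RingHom.mem_ker]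
    exact psi_gen d ha hb1 hb2 hd _ _ _ _ _ _
  refine le_antisymm hker ?_
  intro f hf
  have hgen : ∀ (a b : ℕ) (h1 : a + 1 < d + 1) (h2 : b + 1 < d + 1) (h3 : a + 2 < d + 1)
      (h4 : b < d + 1) (h5 : a < d + 1) (h6 : b - 1 < d + 1),
      a ≤ d - 2 → 1 ≤ b → b ≤ d - 1 →
      (X (⟨a + 1, h1⟩ : Fin (d + 1)) * X ⟨b + 1, h2⟩
        - X ⟨a + 2, h3⟩ * X ⟨b, h4⟩
        + X ⟨a, h5⟩ * X ⟨b, h4⟩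
        - X ⟨a + 1, h1⟩ * X ⟨b - 1, h6⟩) ∈ I := by
    intro a b h1 h2 h3 h4 h5 h6 ha hb1 hb2
    rw [hI]
    exact Ideal.subset_span ⟨a, b, ha, hb1, hb2, rfl⟩
  have hV : f ∈ Submodule.restrictScalars ℂ I ⊔ Submodule.span ℂ (CanonSet d) := by
    rw [MvPolynomial.as_sum f]
    apply Submodule.sum_mem
    intro v _
    have hmv : monomial v (coeff v f) = (coeff v f) • monomial v (1 : ℂ) := by
      rw [MvPolynomial.smul_monomial, smul_eq_mul, mul_one]
    rw [hmv]
    exact Submodule.smul_mem _ _ (monomial_mem d hd I hgen v)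
  obtain ⟨g, hg, h, hh, hfgh⟩ := Submodule.mem_sup.mp hV
  have hgI : g ∈ I := (Submodule.restrictScalars_mem ℂ I g).mp hg
  have hψg : ψ d g = 0 := by
    have := hker hgI
    rwa [RingHom.mem_ker] at this
  have hψf : ψ d f = 0 := by rwa [RingHom.mem_ker] at hf
  have hψh : ψ d h = 0 := by
    have : ψ d (g + h) = 0 := by rw [hfgh]; exact hψf
    rw [map_add, hψg, zero_add] at this
    exact this
  obtain ⟨l, hlsupp, hlsum⟩ := Submodule.mem_span_set.mp hh
  have hinj : Function.Injective (fun σ : Fin (d + 1) →₀ ℕ => (monomial σ (1 : ℂ))) :=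
    MvPolynomial.monomial_left_injective one_ne_zero
  have hbij : Set.BijOn (fun σ : Fin (d + 1) →₀ ℕ => (monomial σ (1 : ℂ)))
      ((fun σ : Fin (d + 1) →₀ ℕ => (monomial σ (1 : ℂ))) ⁻¹' ↑l.support) ↑l.support := by
    refine ⟨fun τ hτ => hτ, hinj.injOn, ?_⟩
    intro m hm
    obtain ⟨σ, _, rfl⟩ := hlsupp hm
    exact ⟨σ, hm, rfl⟩
  set c := Finsupp.comapDomain _ l hbij.injOn with hc
  have hcanon : ∀ σ ∈ c.support, Canon d σ := by
    intro σ hσ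
    rw [hc, Finsupp.comapDomain_support, Finset.mem_preimage] at hσ
    obtain ⟨σ', hσ', heqm⟩ := hlsupp hσ
    exact hinj heqm.symm ▸ hσ'
  have hcsum : (c.sum fun σ r => r • Rrow d σ) = 0 := by
    have h1 : c.sum ((fun (mi : MvPolynomial (Fin (d + 1)) ℂ) (r : ℂ) => r • ψ d mi)
        ∘ (fun σ : Fin (d + 1) →₀ ℕ => (monomial σ (1 : ℂ))))
        = l.sum fun mi r => r • ψ d mi := Finsupp.sum_comapDomain _ l _ hbij
    have h2 : (l.sum fun mi r => r • ψ d mi) = ψ d h := by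
      rw [← hlsum, map_finsuppSum]
      exact Finsupp.sum_congr fun mi _ => (map_smul (ψ d) _ _).symm
    have h3 : (c.sum fun σ r => r • Rrow d σ)
        = c.sum ((fun (mi : MvPolynomial (Fin (d + 1)) ℂ) (r : ℂ) => r • ψ d mi)
          ∘ (fun σ : Fin (d + 1) →₀ ℕ => (monomial σ (1 : ℂ)))) := by
      apply Finsupp.sum_congr
      intro σ _
      show c σ • Rrow d σ = c σ • ψ d (monomial σ 1)
      rw [psi_monomial]
    rw [h3, h1, h2, hψh]
  have hc0 : c = 0 := indep d c hcanon hcsum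
  have hl0 : l = 0 := Finsupp.eq_zero_of_comapDomain_eq_zero _ l hbij hc0
  have hh0 : h = 0 := by
    rw [← hlsum, hl0, Finsupp.sum_zero_index]
  rw [← hfgh, hh0, add_zero]
  exact hgI

end
end Odeco

open MvPolynomial

/-- for `n = 2`, the ideal generated by the conjectured odeco
equations `f_{a,b} = u_{a+1}u_{b+1} - u_{a+2}u_b + u_a u_b - u_{a+1}u_{b-1}`
(for `0 ≤ a ≤ d-2`, `1 ≤ b ≤ d-1`) in `ℂ[u₀,…,u_d]` is prime. -/
theorem odeco_ideal_n2_prime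
    (d : ℕ) (hd : 2 ≤ d)
    (I : Ideal (MvPolynomial (Fin (d + 1)) ℂ))
    (hI : I = Ideal.span {p | ∃ a b : ℕ,
        ∃ (_ : a ≤ d - 2) (_ : 1 ≤ b) (_ : b ≤ d - 1),
        p = X (⟨a + 1, by omega⟩ : Fin (d + 1)) * X ⟨b + 1, by omega⟩
            - X ⟨a + 2, by omega⟩ * X ⟨b, by omega⟩
            + X ⟨a, by omega⟩ * X ⟨b, by omega⟩
            - X ⟨a + 1, by omega⟩ * X ⟨b - 1, by omega⟩}) :
    I.IsPrime := by
  rw [Odeco.span_eq_ker d hd I hI]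
  exact RingHom.ker_isPrime _
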